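/- Suppose a weight w on ℝⁿ satisfies w(E)/w(Δ) ≤ (1+α)(|E|/|Δ|)^{1−α} for all balls Δ and E ⊆ Δ, and fix M > 1. If α is sufficiently small depending on M and n, then for all x ∈ ℝⁿ, R > 0, y ∈ B(x,R), and r,s ∈ [R/M, MR]: w(B(x,r))/w(B(y,s)) ≤ (1 + 1/M)(r/s)ⁿ. Applying the bound symmetrically, w has the M-good doubling property. -/

import Mathlib

open MeasureTheory Metric Set Real Filter
noncomputable section

/-- `w` has the `M`-good doubling property: for all `x, R`, all `y ∈ B(x,R)` and all
`s, r ∈ [R/M, MR]`, `(1+1/M)⁻¹ ≤ [w(B(x,r))/w(B(y,s))]·(sⁿ/rⁿ) ≤ 1+1/M`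
(stated in multiplied-out form). -/
def GoodDoubling (n : ℕ) (M : ℝ) (w : EuclideanSpace ℝ (Fin n) → ℝ) : Prop :=
  ∀ (x : EuclideanSpace ℝ (Fin n)) (R : ℝ), 0 < R → ∀ y ∈ Metric.ball x R,
    ∀ r ∈ Set.Icc (R/M) (M*R), ∀ s ∈ Set.Icc (R/M) (M*R),
      (1+1/M)⁻¹ * (∫ z in Metric.ball y s, w z) * r^n ≤ (∫ z in Metric.ball x r, w z) * s^n ∧
      (∫ z in Metric.ball x r, w z) * s^n ≤ (1+1/M) * (∫ z in Metric.ball y s, w z) * r^n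

/-- Bernoulli's inequality in the form `t^α ≤ 1 + α(t-1)` for `t ≥ 1`, `0 ≤ α ≤ 1`. -/
lemma bern_aux {t α : ℝ} (ht : 1 ≤ t) (h0 : 0 ≤ α) (h1 : α ≤ 1) :
    t ^ α ≤ 1 + α * (t - 1) := by
  have h := rpow_one_add_le_one_add_mul_self (s := t - 1) (by linarith) h0 h1
  have e : (1 : ℝ) + (t - 1) = t := by ring
  rwa [e] at h

/-- Volume of a Euclidean ball, as a real number. -/
lemma euclidean_vol_ball {n : ℕ} (hn : 0 < n) (c : EuclideanSpace ℝ (Fin n)) {ρ : ℝ}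
    (hρ : 0 ≤ ρ) :
    (volume (Metric.ball c ρ)).toReal
      = ρ ^ n * (volume (Metric.ball (0 : EuclideanSpace ℝ (Fin n)) 1)).toReal := by
  haveI : Nontrivial (EuclideanSpace ℝ (Fin n)) :=
    Module.nontrivial_of_finrank_pos (R := ℝ) (by simp [finrank_euclideanSpace_fin, hn])
  rw [Measure.addHaar_ball volume c hρ, ENNReal.toReal_mul,
    ENNReal.toReal_ofReal (by positivity), finrank_euclideanSpace_fin]

/-- In dimension `0`, every ball of positive radius is everything. -/
lemma ball_zero_dim (c : EuclideanSpace ℝ (Fin 0)) {ρ : ℝ} (hρ : 0 < ρ) :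
    Metric.ball c ρ = Set.univ := by
  apply eq_univ_of_forall
  intro z
  simpa [Metric.mem_ball, Subsingleton.elim z c] using hρ

set_option maxHeartbeats 2000000 in
/-- If `w` satisfies `w(E)/w(Δ) ≤ (1+α)(|E|/|Δ|)^{1−α}` for all balls `Δ`
and measurable `E ⊆ Δ`, and `α` is sufficiently small depending on `M` and `n`, then for all
`x`, `R > 0`, `y ∈ B(x,R)` and `r, s ∈ [R/M, MR]`:
`w(B(x,r))/w(B(y,s)) ≤ (1+1/M)(r/s)ⁿ` (in multiplied-out form); applying the bound
symmetrically, `w` has the `M`-good doubling property. -/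
theorem good_doubling_from_Korey (n : ℕ) (M : ℝ) (hM : 1 < M) :
    ∃ α₀ ∈ Set.Ioo (0:ℝ) 1, ∀ α ∈ Set.Ioc (0:ℝ) α₀,
      ∀ w : EuclideanSpace ℝ (Fin n) → ℝ,
        (∀ x, 0 ≤ w x) → MeasureTheory.LocallyIntegrable w →
        (∀ (x : EuclideanSpace ℝ (Fin n)) (r : ℝ), 0 < r →
          ∀ E ⊆ Metric.ball x r, MeasurableSet E →
            (∫ z in E, w z) ≤ (1+α) *
              ((MeasureTheory.volume E).toReal /
                (MeasureTheory.volume (Metric.ball x r)).toReal) ^ (1-α) *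
              ∫ z in Metric.ball x r, w z) →
        (∀ (x : EuclideanSpace ℝ (Fin n)) (R : ℝ), 0 < R → ∀ y ∈ Metric.ball x R,
          ∀ r ∈ Set.Icc (R/M) (M*R), ∀ s ∈ Set.Icc (R/M) (M*R),
            (∫ z in Metric.ball x r, w z) * s^n
              ≤ (1+1/M) * (∫ z in Metric.ball y s, w z) * r^n) ∧
        GoodDoubling n M w := by
  have hM0 : (0:ℝ) < M := by linarith
  obtain ⟨δ, hδdef⟩ : ∃ δ : ℝ, δ = 1/M := ⟨_, rfl⟩
  have hδ0 : 0 < δ := by rw [hδdef]; positivity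
  have hδ1 : δ < 1 := by rw [hδdef, div_lt_one hM0]; linarith
  obtain ⟨P, hPdef⟩ : ∃ P : ℝ, P = (10*M^2)^n := ⟨_, rfl⟩
  have hP1 : (1:ℝ) ≤ P := by
    rw [hPdef]; exact one_le_pow₀ (by nlinarith only [hM, sq_nonneg (M-1)])
  have hP0 : (0:ℝ) < P := by linarith
  refine ⟨min (δ/(8*P)) (1/2), ⟨lt_min (by positivity) (by norm_num),
    lt_of_le_of_lt (min_le_right _ _) (by norm_num)⟩, ?_⟩
  rintro α ⟨hα0, hαle⟩ w hw hloc hK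
  have hαP8 : α * (8*P) ≤ δ :=
    (le_div_iff₀ (by positivity)).1 (hαle.trans (min_le_left _ _))
  have hα1 : α ≤ 1 := (hαle.trans (min_le_right _ _)).trans (by norm_num)
  -- the main one-sided bound
  have main : ∀ (x : EuclideanSpace ℝ (Fin n)) (R : ℝ), 0 < R → ∀ y ∈ Metric.ball x R,
      ∀ r ∈ Set.Icc (R/M) (M*R), ∀ s ∈ Set.Icc (R/M) (M*R),
        (∫ z in Metric.ball x r, w z) * s^n
          ≤ (1+1/M) * (∫ z in Metric.ball y s, w z) * r^n := by
    intro x R hR y hy r hr s hs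
    obtain ⟨hr1, hr2⟩ := hr
    obtain ⟨hs1, hs2⟩ := hs
    have hrpos : 0 < r := lt_of_lt_of_le (by positivity) hr1
    have hspos : 0 < s := lt_of_lt_of_le (by positivity) hs1
    have hRr : R ≤ M * r := by
      rw [div_le_iff₀ hM0] at hr1; linarith only [hr1]
    have hRs : R ≤ M * s := by
      rw [div_le_iff₀ hM0] at hs1; linarith only [hs1]
    have hMR : R ≤ M * R := by
      nlinarith only [hM, hR]
    have hMRpos : 0 < M * R := by positivity
    obtain ⟨T, hT⟩ : ∃ T : ℝ, T = 10*M*R := ⟨_, rfl⟩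
    have hTpos : 0 < T := by rw [hT]; positivity
    have hdyx : dist y x < R := mem_ball.1 hy
    have hsub_r : Metric.ball x r ⊆ Metric.ball x T :=
      ball_subset_ball (by rw [hT]; linarith only [hr2, hMRpos])
    have hsub_s : Metric.ball y s ⊆ Metric.ball x T :=
      ball_subset_ball' (by rw [hT]; linarith only [hs2, hdyx, hMR, hMRpos])
    have hint : IntegrableOn w (Metric.ball x T) :=
      (hloc.integrableOn_isCompact (isCompact_closedBall x T)).mono_set
        ball_subset_closedBall
    have hK1 := hK x T hTpos (Metric.ball x r) hsub_r measurableSet_ball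
    have hK2 := hK x T hTpos (Metric.ball x T \ Metric.ball y s) diff_subset
      (measurableSet_ball.diff measurableSet_ball)
    have hZeq : ∫ z in Metric.ball x T \ Metric.ball y s, w z
        = (∫ z in Metric.ball x T, w z) - ∫ z in Metric.ball y s, w z :=
      integral_diff measurableSet_ball hint hsub_s
    set X := ∫ z in Metric.ball x r, w z with hXdef
    set Y := ∫ z in Metric.ball y s, w z with hYdef
    set W := ∫ z in Metric.ball x T, w z with hWdef
    set Z := ∫ z in Metric.ball x T \ Metric.ball y s, w z with hZdef
    clear_value X Y W Z
    have hX0 : 0 ≤ X := hXdef ▸ setIntegral_nonneg measurableSet_ball fun z _ => hw z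
    have hY0 : 0 ≤ Y := hYdef ▸ setIntegral_nonneg measurableSet_ball fun z _ => hw z
    have hW0 : 0 ≤ W := hWdef ▸ setIntegral_nonneg measurableSet_ball fun z _ => hw z
    rcases Nat.eq_zero_or_pos n with hn | hn
    · -- dimension 0 : all balls coincide
      subst hn
      have hxr : Metric.ball x r = Set.univ := ball_zero_dim x hrpos
      have hys : Metric.ball y s = Set.univ := ball_zero_dim y hspos
      have hXY : X = Y := by rw [hXdef, hYdef, hxr, hys]
      simp only [pow_zero, mul_one]
      rw [hXY]
      have h1M : 0 < 1/M := by positivity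
      nlinarith only [hY0, h1M]
    · -- dimension ≥ 1
      have hc : (0:ℝ) < (volume (Metric.ball (0 : EuclideanSpace ℝ (Fin n)) 1)).toReal :=
        ENNReal.toReal_pos (measure_ball_pos volume _ one_pos).ne' measure_ball_lt_top.ne
      have hratio1 : (volume (Metric.ball x r)).toReal
          / (volume (Metric.ball x T)).toReal = (r/T)^n := by
        rw [euclidean_vol_ball hn x hrpos.le, euclidean_vol_ball hn x hTpos.le, div_pow,
          mul_div_mul_right _ _ hc.ne']
      have hratio2 : (volume (Metric.ball x T \ Metric.ball y s)).toReal
          / (volume (Metric.ball x T)).toReal = 1 - (s/T)^n := by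
        rw [measure_diff hsub_s measurableSet_ball.nullMeasurableSet measure_ball_lt_top.ne,
          ENNReal.toReal_sub_of_le (measure_mono hsub_s) measure_ball_lt_top.ne,
          euclidean_vol_ball hn y hspos.le, euclidean_vol_ball hn x hTpos.le, div_pow]
        have hTn : (0:ℝ) < T^n := by positivity
        field_simp
      rw [hratio1] at hK1
      rw [hratio2] at hK2
      set tr : ℝ := (r/T)^n with htr
      set ts : ℝ := (s/T)^n with hts
      clear_value tr ts
      have htrpos : 0 < tr := by rw [htr]; positivity
      have htspos : 0 < ts := by rw [hts]; positivity
      -- bounds on the normalized radii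
      have h10M2 : (0:ℝ) < 10*M^2 := by positivity
      have h10MR : (0:ℝ) < 10*M*R := by positivity
      have hur1 : (10*M^2)⁻¹ ≤ r/T := by
        rw [hT, inv_eq_one_div, div_le_div_iff₀ h10M2 h10MR]
        linarith only [mul_nonneg (by positivity : (0:ℝ) ≤ 10*M) (sub_nonneg.2 hRr)]
      have hur2 : r/T ≤ 1/10 := by
        rw [hT, div_le_div_iff₀ h10MR (by norm_num : (0:ℝ) < 10)]
        linarith only [hr2]
      have hus1 : (10*M^2)⁻¹ ≤ s/T := by
        rw [hT, inv_eq_one_div, div_le_div_iff₀ h10M2 h10MR]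
        linarith only [mul_nonneg (by positivity : (0:ℝ) ≤ 10*M) (sub_nonneg.2 hRs)]
      have hus2 : s/T ≤ 1/10 := by
        rw [hT, div_le_div_iff₀ h10MR (by norm_num : (0:ℝ) < 10)]
        linarith only [hs2]
      have hpow_small : ∀ u : ℝ, 0 ≤ u → u ≤ 1/10 → u^n ≤ 1/10 := by
        intro u hu hu10
        calc u^n ≤ (1/10:ℝ)^n := pow_le_pow_left₀ hu hu10 n
          _ ≤ (1/10:ℝ)^1 := pow_le_pow_of_le_one (by norm_num) (by norm_num) hn
          _ = 1/10 := pow_one _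
      have htr10 : tr ≤ 1/10 := by
        rw [htr]; exact hpow_small _ (by positivity) hur2
      have hts10 : ts ≤ 1/10 := by
        rw [hts]; exact hpow_small _ (by positivity) hus2
      have hPinv_tr : P⁻¹ ≤ tr := by
        rw [htr, hPdef, ← inv_pow]
        exact pow_le_pow_left₀ (by positivity) hur1 n
      have hPinv_ts : P⁻¹ ≤ ts := by
        rw [hts, hPdef, ← inv_pow]
        exact pow_le_pow_left₀ (by positivity) hus1 n
      have htsP : 1 ≤ ts * P := by
        have h := mul_le_mul_of_nonneg_right hPinv_ts hP0.le
        rwa [inv_mul_cancel₀ hP0.ne'] at h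
      have htrinvP : tr⁻¹ ≤ P := by
        rw [inv_le_comm₀ htrpos hP0]
        exact hPinv_tr
      -- rpow bounds
      have hbound1 : tr ^ ((1:ℝ)-α) ≤ tr * (1 + α * (P - 1)) := by
        have h1 : tr ^ ((1:ℝ)-α) = tr * (tr⁻¹) ^ α := by
          rw [Real.rpow_sub htrpos, Real.rpow_one, Real.inv_rpow htrpos.le,
            div_eq_mul_inv]
        have hinv1 : (1:ℝ) ≤ tr⁻¹ := by
          rw [le_inv_comm₀ one_pos htrpos]; linarith
        have h2 : (tr⁻¹) ^ α ≤ 1 + α * (tr⁻¹ - 1) := bern_aux hinv1 hα0.le hα1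
        have h3 : 1 + α * (tr⁻¹ - 1) ≤ 1 + α * (P - 1) := by
          linarith only [mul_nonneg hα0.le (sub_nonneg.2 htrinvP)]
        rw [h1]
        exact mul_le_mul_of_nonneg_left (h2.trans h3) htrpos.le
      have hbound2 : (1 - ts) ^ ((1:ℝ)-α) ≤ (1 - ts) * (1 + α) := by
        have hpos : (0:ℝ) < 1 - ts := by linarith
        have h1 : (1-ts) ^ ((1:ℝ)-α) = (1-ts) * ((1-ts)⁻¹) ^ α := by
          rw [Real.rpow_sub hpos, Real.rpow_one, Real.inv_rpow hpos.le, div_eq_mul_inv]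
        have hinv1 : (1:ℝ) ≤ (1-ts)⁻¹ := by
          rw [le_inv_comm₀ one_pos hpos]; linarith
        have hinv2 : (1-ts)⁻¹ ≤ 10/9 := by
          rw [inv_le_comm₀ hpos (by norm_num)]; linarith
        have h2 : ((1-ts)⁻¹) ^ α ≤ 1 + α * ((1-ts)⁻¹ - 1) := bern_aux hinv1 hα0.le hα1
        have h3 : 1 + α * ((1-ts)⁻¹ - 1) ≤ 1 + α := by
          linarith only [mul_nonneg hα0.le (sub_nonneg.2 hinv2), hα0.le]
        rw [h1]
        exact mul_le_mul_of_nonneg_left (h2.trans h3) hpos.le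
      -- upper bound on X
      have hXb : X ≤ (1 + 2*α*P) * (tr * W) := by
        have h4 : (1+α) * (tr ^ ((1:ℝ)-α)) * W ≤ (1+α) * (tr * (1 + α*(P-1))) * W :=
          mul_le_mul_of_nonneg_right
            (mul_le_mul_of_nonneg_left hbound1 (by linarith)) hW0
        have hcc : (1+α) * (1 + α*(P-1)) ≤ 1 + 2*α*P := by
          linarith only [hα0.le,
            mul_nonneg (mul_nonneg hα0.le (sub_nonneg.2 hα1)) (sub_nonneg.2 hP1)]
        have h5 : (1+α) * (tr * (1 + α*(P-1))) * W ≤ (1 + 2*α*P) * (tr * W) := by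
          linarith only [mul_le_mul_of_nonneg_right hcc (mul_nonneg htrpos.le hW0)]
        calc X ≤ (1+α) * (tr ^ ((1:ℝ)-α)) * W := hK1
          _ ≤ (1+α) * (tr * (1 + α*(P-1))) * W := h4
          _ ≤ (1 + 2*α*P) * (tr * W) := h5
      -- lower bound on Y
      have hYb : ts * (1 - 3*α*P) * W ≤ Y := by
        have hZb : Z ≤ (1+α) * ((1 - ts) * (1+α)) * W := by
          calc Z ≤ (1+α) * ((1-ts) ^ ((1:ℝ)-α)) * W := hK2
            _ ≤ (1+α) * ((1 - ts) * (1+α)) * W :=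
              mul_le_mul_of_nonneg_right
                (mul_le_mul_of_nonneg_left hbound2 (by linarith)) hW0
        have key : ts * (1 - 3*α*P) ≤ 1 - (1+α) * ((1 - ts) * (1+α)) := by
          linarith only [mul_nonneg hα0.le (sub_nonneg.2 htsP),
            mul_nonneg hα0.le (sub_nonneg.2 hα1),
            mul_nonneg hα0.le htspos.le,
            mul_nonneg (mul_nonneg hα0.le hα0.le) htspos.le]
        have hYW : Y = W - Z := by rw [hZeq]; ring
        have hkey' := mul_le_mul_of_nonneg_right key hW0
        linarith only [hkey', hYW, hZb]
      -- combine
      have hcoef : (1 + 2*α*P) ≤ (1 + δ) * (1 - 3*α*P) := by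
        linarith only [hαP8,
          mul_nonneg (mul_nonneg hα0.le hP0.le) (sub_nonneg.2 hδ1.le)]
      have hswap : tr * s^n = ts * r^n := by
        rw [htr, hts, div_pow, div_pow]; ring
      have hQ0 : 0 ≤ (ts * r^n) * W :=
        mul_nonneg (mul_nonneg htspos.le (pow_nonneg hrpos.le n)) hW0
      calc X * s^n ≤ ((1 + 2*α*P) * (tr * W)) * s^n :=
            mul_le_mul_of_nonneg_right hXb (pow_nonneg hspos.le n)
        _ = (1 + 2*α*P) * ((tr * s^n) * W) := by ring
        _ = (1 + 2*α*P) * ((ts * r^n) * W) := by rw [hswap]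
        _ ≤ ((1 + δ) * (1 - 3*α*P)) * ((ts * r^n) * W) :=
            mul_le_mul_of_nonneg_right hcoef hQ0
        _ = (1 + δ) * ((ts * (1 - 3*α*P) * W) * r^n) := by ring
        _ ≤ (1 + δ) * (Y * r^n) := by
            have h6 := mul_le_mul_of_nonneg_right hYb (pow_nonneg hrpos.le n)
            exact mul_le_mul_of_nonneg_left h6 (by linarith only [hδ0])
        _ = (1+1/M) * Y * r^n := by rw [hδdef]; ring
  refine ⟨main, ?_⟩
  intro x R hR y hy r hr s hs
  have h1 := main x R hR y hy r hr s hs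
  have hyx : x ∈ Metric.ball y R := by
    rw [mem_ball, dist_comm]; exact mem_ball.1 hy
  have h2 := main y R hR x hyx s hs r hr
  have hpos : (0:ℝ) < 1 + 1/M := by positivity
  refine ⟨?_, h1⟩
  calc (1+1/M)⁻¹ * (∫ z in Metric.ball y s, w z) * r^n
      = (1+1/M)⁻¹ * ((∫ z in Metric.ball y s, w z) * r^n) := by ring
    _ ≤ (1+1/M)⁻¹ * ((1+1/M) * (∫ z in Metric.ball x r, w z) * s^n) := by
        apply mul_le_mul_of_nonneg_left _ (inv_nonneg.2 hpos.le)
        exact h2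
    _ = (∫ z in Metric.ball x r, w z) * s^n := by
        field_simp
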